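/- Strict tightening of Voigt over zeroth-order constraints (pointwise witness): assume 0 < V̄ < 1, set α = Δκ/(Δκ + 2Δμ) ∈ (0,1), θ = min{1, V̄/α}, and let Â = M(κ⁻ + θ·Δκ, μ⁻). Then θ > V̄ and α·θ ≤ V̄; the matrix Â satisfies M(κ⁻,μ⁻) ⪯ Â ⪯ M(κ⁺,μ⁺) and the trace bound trace(Â) ≤ V̄·trace(M(κ⁺,μ⁺)) + (1 − V̄)·trace(M(κ⁻,μ⁻)); yet every v ∈ [0,1] with Â ⪯ (1−v)·M(κ⁻,μ⁻) + v·M(κ⁺,μ⁺) satisfies v ≥ θ > V̄. Hence Â is zeroth-order feasible but admits no Voigt-admissible volume fraction at most V̄. -/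

import Mathlib

open Matrix

/-- Kelvin–Mandel matrix of the isotropic plane-stress elasticity tensor with
bulk modulus `κ` and shear modulus `μ`. -/
noncomputable def KM (κ μ : ℝ) : Matrix (Fin 3) (Fin 3) ℝ :=
  !![κ + μ, κ - μ, 0; κ - μ, κ + μ, 0; 0, 0, 2 * μ]

lemma KM_psd {a b : ℝ} (ha : 0 ≤ a) (hb : 0 ≤ b) : (KM a b).PosSemidef := by
  rw [posSemidef_iff_dotProduct_mulVec]
  constructor
  · ext i j
    fin_cases i <;> fin_cases j <;>
      simp [KM, Matrix.conjTranspose_apply]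
  · intro x
    have h1 := sq_nonneg (x 0 + x 1)
    have h2 := sq_nonneg (x 0 - x 1)
    have h3 := sq_nonneg (x 2)
    simp [KM, Matrix.mulVec, dotProduct, Fin.sum_univ_three]
    nlinarith [mul_nonneg ha h1, mul_nonneg hb h2, mul_nonneg hb h3]

lemma KM_sub (a b c d : ℝ) : KM a b - KM c d = KM (a - c) (b - d) := by
  ext i j
  fin_cases i <;> fin_cases j <;> simp [KM] <;> ring

lemma KM_comb (v a b c d : ℝ) :
    (1 - v) • KM a b + v • KM c d = KM ((1 - v) * a + v * c) ((1 - v) * b + v * d) := by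
  ext i j
  fin_cases i <;> fin_cases j <;> simp [KM] <;> ring

lemma KM_trace (a b : ℝ) : (KM a b).trace = 2 * a + 4 * b := by
  simp [KM, Matrix.trace, Fin.sum_univ_three]
  ring

theorem voigt_strictly_tighter_than_zeroth_order
    (κm κp μm μp : ℝ) (hκm : 0 < κm) (hκ : κm < κp) (hμm : 0 < μm) (hμ : μm < μp)
    (Vbar : ℝ) (hV : Vbar ∈ Set.Ioo (0 : ℝ) 1)
    (α θ : ℝ) (hα : α = (κp - κm) / ((κp - κm) + 2 * (μp - μm)))
    (hθ : θ = min 1 (Vbar / α))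
    (Ahat : Matrix (Fin 3) (Fin 3) ℝ) (hA : Ahat = KM (κm + θ * (κp - κm)) μm) :
    α ∈ Set.Ioo (0 : ℝ) 1 ∧
    Vbar < θ ∧ α * θ ≤ Vbar ∧
    (Ahat - KM κm μm).PosSemidef ∧ (KM κp μp - Ahat).PosSemidef ∧
    Ahat.trace ≤ Vbar * (KM κp μp).trace + (1 - Vbar) * (KM κm μm).trace ∧
    ∀ v : ℝ, v ∈ Set.Icc (0 : ℝ) 1 →
      ((1 - v) • KM κm μm + v • KM κp μp - Ahat).PosSemidef → θ ≤ v := by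
  obtain ⟨hV0, hV1⟩ := hV
  have hΔκ : 0 < κp - κm := by linarith
  have hΔμ : 0 < μp - μm := by linarith
  have hden : 0 < (κp - κm) + 2 * (μp - μm) := by linarith
  have hα0 : 0 < α := by rw [hα]; positivity
  have hα1 : α < 1 := by
    rw [hα, div_lt_one hden]; linarith
  have hVα : Vbar < Vbar / α := by
    rw [lt_div_iff₀ hα0]
    nlinarith
  have hθV : Vbar < θ := by
    rw [hθ]; exact lt_min hV1 hVα
  have hθ1 : θ ≤ 1 := by rw [hθ]; exact min_le_left _ _
  have hθ0 : 0 < θ := lt_trans hV0 hθV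
  have hαθ : α * θ ≤ Vbar := by
    have : θ ≤ Vbar / α := by rw [hθ]; exact min_le_right _ _
    calc α * θ ≤ α * (Vbar / α) := by nlinarith
      _ = Vbar := by field_simp
  have hθVα : θ ≤ Vbar / α := by rw [hθ]; exact min_le_right _ _
  refine ⟨⟨hα0, hα1⟩, hθV, hαθ, ?_, ?_, ?_, ?_⟩
  · rw [hA, KM_sub]
    have : κm + θ * (κp - κm) - κm = θ * (κp - κm) := by ring
    rw [this, sub_self]
    exact KM_psd (by positivity) le_rfl
  · rw [hA, KM_sub]
    have : κp - (κm + θ * (κp - κm)) = (1 - θ) * (κp - κm) := by ring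
    rw [this]
    exact KM_psd (by nlinarith) (le_of_lt hΔμ)
  · rw [hA, KM_trace, KM_trace, KM_trace]
    have hαD : α * ((κp - κm) + 2 * (μp - μm)) = κp - κm := by
      rw [hα]; field_simp
    have : θ * (κp - κm) ≤ Vbar * ((κp - κm) + 2 * (μp - μm)) := by
      nlinarith [hαθ]
    nlinarith
  · intro v _ hpsd
    rw [hA, KM_comb, KM_sub] at hpsd
    have key := hpsd.dotProduct_mulVec_nonneg ![(1:ℝ), 1, 0]
    simp [KM, Matrix.mulVec, dotProduct, Fin.sum_univ_three] at key
    nlinarith
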